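/- In the Balanced-Partition reduction for Two-Stage Selection with three scenarios: given positive integers a_1,…,a_n (n even) with ∑_i a_i = 2b, construct items e_1,…,e_n with first-stage cost 3b + a_i and scenario costs c^{S1}_{e_i} = 2a_i, c^{S2}_{e_i} = 6b/n − a_i, c^{S3}_{e_i} = M, plus items f_1,…,f_{n/2} with first-stage cost M and scenario costs M, M, 0, where M = 4nb, and set p = n. Then there exists I ⊆ [n] with |I| = n/2 and ∑_{i∈I} a_i = b if and only if opt₁ ≤ (3n/2 + 3)·b. -/

import Mathlib

open Finset

/-- Second-stage completion cost: the minimum cost of completing `X` to `p`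
items using items outside `X`, under scenario costs `c`. -/
noncomputable def complMin {ι : Type*} [Fintype ι] [DecidableEq ι]
    (c : ι → ℝ) (X : Finset ι) (p : ℕ) : ℝ :=
  sInf {v : ℝ | ∃ Y ⊆ Finset.univ \ X, Y.card = p - X.card ∧ v = ∑ e ∈ Y, c e}

/-- The two-stage cost `f₁(X,S)` of a first-stage solution `X`. -/
noncomputable def f1 {ι : Type*} [Fintype ι] [DecidableEq ι]
    (C c : ι → ℝ) (X : Finset ι) (p : ℕ) : ℝ :=
  ∑ e ∈ X, C e + complMin c X p

lemma complMin_bddBelow {ι : Type*} [Fintype ι] [DecidableEq ι] (c : ι → ℝ)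
    (X : Finset ι) (p : ℕ) :
    BddBelow {v : ℝ | ∃ Y ⊆ Finset.univ \ X, Y.card = p - X.card ∧ v = ∑ e ∈ Y, c e} :=
  (Set.Finite.subset (Set.finite_range fun Y : Finset ι => ∑ e ∈ Y, c e)
    (by rintro v ⟨Y, _, _, rfl⟩; exact ⟨Y, rfl⟩)).bddBelow

lemma complMin_le {ι : Type*} [Fintype ι] [DecidableEq ι] (c : ι → ℝ) {X Y : Finset ι} {p : ℕ}
    (hY : Y ⊆ Finset.univ \ X) (hcard : Y.card = p - X.card) :
    complMin c X p ≤ ∑ e ∈ Y, c e :=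
  csInf_le (complMin_bddBelow c X p) ⟨Y, hY, hcard, rfl⟩

lemma le_complMin {ι : Type*} [Fintype ι] [DecidableEq ι] (c : ι → ℝ) {X : Finset ι}
    {p : ℕ} {L : ℝ}
    (hfeas : p - X.card ≤ (Finset.univ \ X).card)
    (h : ∀ Y ⊆ Finset.univ \ X, Y.card = p - X.card → L ≤ ∑ e ∈ Y, c e) :
    L ≤ complMin c X p := by
  obtain ⟨Y, hY, hYc⟩ := Finset.exists_subset_card_eq hfeas
  exact le_csInf ⟨_, Y, hY, hYc, rfl⟩ (by rintro v ⟨Z, hZ, hZc, rfl⟩; exact h Z hZ hZc)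

set_option maxHeartbeats 1600000 in
theorem balanced_partition_two_stage_reduction (m b : ℕ) (hm : 1 ≤ m)
    (a : Fin (2 * m) → ℕ) (ha : ∀ i, 0 < a i) (hsum : ∑ i, a i = 2 * b)
    (M : ℝ) (hM : M = 4 * (2 * m) * b)
    (C c1 c2 c3 : (Fin (2 * m) ⊕ Fin m) → ℝ)
    (hC : C = Sum.elim (fun i => 3 * b + (a i : ℝ)) (fun _ => M))
    (hc1 : c1 = Sum.elim (fun i => 2 * (a i : ℝ)) (fun _ => M))
    (hc2 : c2 = Sum.elim (fun i => 6 * b / (2 * m) - (a i : ℝ)) (fun _ => M))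
    (hc3 : c3 = Sum.elim (fun _ => M) (fun _ => 0)) :
    (∃ I : Finset (Fin (2 * m)), I.card = m ∧ ∑ i ∈ I, a i = b) ↔
      sInf {v : ℝ | ∃ X : Finset (Fin (2 * m) ⊕ Fin m), X.card ≤ 2 * m ∧
          v = max (f1 C c1 X (2 * m))
                (max (f1 C c2 X (2 * m)) (f1 C c3 X (2 * m)))} ≤
        (3 * m + 3) * b := by
  have hbm : m ≤ b := by
    have h2 : ∑ i : Fin (2 * m), 1 ≤ ∑ i, a i := Finset.sum_le_sum fun i _ => ha i
    simp only [Finset.sum_const, Finset.card_univ, Fintype.card_fin, smul_eq_mul,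
      mul_one] at h2
    omega
  have hb1 : 1 ≤ b := le_trans hm hbm
  have hm1R : (1 : ℝ) ≤ m := by exact_mod_cast hm
  have hb1R : (1 : ℝ) ≤ b := by exact_mod_cast hb1
  have hm0 : (0 : ℝ) < m := by linarith
  have hM0 : (0 : ℝ) ≤ M := by rw [hM]; positivity
  have hCpos : ∀ e, 0 ≤ C e := by
    rintro (i | j) <;> simp [hC] <;> positivity
  have hc1pos : ∀ e, 0 ≤ c1 e := by
    rintro (i | j) <;> simp [hc1] <;> positivity
  have hc3pos : ∀ e, 0 ≤ c3 e := by
    rintro (i | j) <;> simp [hc3, hM0]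
  have hMT : (3 * (m : ℝ) + 3) * b < M := by rw [hM]; push_cast; nlinarith
  have hsumR : ∑ i, (a i : ℝ) = 2 * b := by exact_mod_cast congrArg (Nat.cast : ℕ → ℝ) hsum
  constructor
  · rintro ⟨I, hIcard, hIsum⟩
    set X : Finset (Fin (2 * m) ⊕ Fin m) := I.image Sum.inl with hX
    have hXcard : X.card = m := by
      rw [hX, Finset.card_image_of_injective _ Sum.inl_injective, hIcard]
    have hIsumR : ∑ i ∈ I, (a i : ℝ) = b := by exact_mod_cast congrArg (Nat.cast : ℕ → ℝ) hIsum
    have hIcsum : ∑ i ∈ Iᶜ, (a i : ℝ) = b := by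
      have := Finset.sum_add_sum_compl I fun i => (a i : ℝ)
      rw [hIsumR, hsumR] at this
      linarith
    have hsumC : ∑ e ∈ X, C e = 3 * (m : ℝ) * b + b := by
      rw [hX, Finset.sum_image (fun _ _ _ _ h => Sum.inl_injective h)]
      simp only [hC, Sum.elim_inl]
      rw [Finset.sum_add_distrib, Finset.sum_const, hIcard, hIsumR]
      push_cast; ring
    -- the three completions
    have hY1sub : (Iᶜ.image Sum.inl : Finset (Fin (2 * m) ⊕ Fin m)) ⊆ Finset.univ \ X := by
      intro e he
      obtain ⟨i, hi, rfl⟩ := Finset.mem_image.mp he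
      refine Finset.mem_sdiff.mpr ⟨Finset.mem_univ _, fun h => ?_⟩
      obtain ⟨i', hi', hii⟩ := Finset.mem_image.mp h
      exact (Finset.mem_compl.mp hi) (Sum.inl_injective hii ▸ hi')
    have hY1card : (Iᶜ.image Sum.inl : Finset (Fin (2 * m) ⊕ Fin m)).card = 2 * m - X.card := by
      rw [Finset.card_image_of_injective _ Sum.inl_injective, Finset.card_compl,
        Fintype.card_fin, hIcard, hXcard]
    have hY3sub : ((Finset.univ : Finset (Fin m)).image Sum.inr :
        Finset (Fin (2 * m) ⊕ Fin m)) ⊆ Finset.univ \ X := by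
      intro e he
      obtain ⟨j, _, rfl⟩ := Finset.mem_image.mp he
      refine Finset.mem_sdiff.mpr ⟨Finset.mem_univ _, fun h => ?_⟩
      obtain ⟨i', _, hii⟩ := Finset.mem_image.mp h
      exact Sum.inl_ne_inr hii
    have hY3card : ((Finset.univ : Finset (Fin m)).image Sum.inr :
        Finset (Fin (2 * m) ⊕ Fin m)).card = 2 * m - X.card := by
      rw [Finset.card_image_of_injective _ Sum.inr_injective, Finset.card_univ,
        Fintype.card_fin, hXcard]
      omega
    have hs1 : ∑ e ∈ Iᶜ.image Sum.inl, c1 e = 2 * (b : ℝ) := by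
      rw [Finset.sum_image (fun _ _ _ _ h => Sum.inl_injective h)]
      simp only [hc1, Sum.elim_inl]
      rw [← Finset.mul_sum, hIcsum]
    have hs2 : ∑ e ∈ Iᶜ.image Sum.inl, c2 e = 2 * (b : ℝ) := by
      rw [Finset.sum_image (fun _ _ _ _ h => Sum.inl_injective h)]
      simp only [hc2, Sum.elim_inl]
      rw [Finset.sum_sub_distrib, Finset.sum_const, hIcsum, Finset.card_compl,
        Fintype.card_fin, hIcard, show 2 * m - m = m from by omega, nsmul_eq_mul]
      field_simp
      ring
    have hs3 : ∑ e ∈ (Finset.univ : Finset (Fin m)).image Sum.inr, c3 e = 0 := by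
      rw [Finset.sum_image (fun _ _ _ _ h => Sum.inr_injective h)]
      simp [hc3]
    have hcm1 := (complMin_le c1 hY1sub hY1card).trans (le_of_eq hs1)
    have hcm2 := (complMin_le c2 hY1sub hY1card).trans (le_of_eq hs2)
    have hcm3 := (complMin_le c3 hY3sub hY3card).trans (le_of_eq hs3)
    have hf1 : f1 C c1 X (2 * m) ≤ (3 * (m : ℝ) + 3) * b := by
      unfold f1; rw [hsumC]; nlinarith
    have hf2 : f1 C c2 X (2 * m) ≤ (3 * (m : ℝ) + 3) * b := by
      unfold f1; rw [hsumC]; nlinarith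
    have hf3 : f1 C c3 X (2 * m) ≤ (3 * (m : ℝ) + 3) * b := by
      unfold f1; rw [hsumC]; nlinarith
    refine le_trans (csInf_le ?_ ⟨X, by omega, rfl⟩) (max_le hf1 (max_le hf2 hf3))
    exact (Set.Finite.subset (Set.finite_range fun X : Finset (Fin (2 * m) ⊕ Fin m) =>
      max (f1 C c1 X (2 * m)) (max (f1 C c2 X (2 * m)) (f1 C c3 X (2 * m))))
      (by rintro v ⟨X, _, rfl⟩; exact ⟨X, rfl⟩)).bddBelow
  · intro hle
    obtain ⟨X, hXle, hveq⟩ :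
        sInf {v : ℝ | ∃ X : Finset (Fin (2 * m) ⊕ Fin m), X.card ≤ 2 * m ∧
          v = max (f1 C c1 X (2 * m))
                (max (f1 C c2 X (2 * m)) (f1 C c3 X (2 * m)))} ∈
        {v : ℝ | ∃ X : Finset (Fin (2 * m) ⊕ Fin m), X.card ≤ 2 * m ∧
          v = max (f1 C c1 X (2 * m))
                (max (f1 C c2 X (2 * m)) (f1 C c3 X (2 * m)))} := by
      refine Set.Nonempty.csInf_mem ⟨_, ∅, by simp, rfl⟩ ?_
      exact Set.Finite.subset (Set.finite_range fun X : Finset (Fin (2 * m) ⊕ Fin m) =>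
        max (f1 C c1 X (2 * m)) (max (f1 C c2 X (2 * m)) (f1 C c3 X (2 * m))))
        (by rintro v ⟨X, _, rfl⟩; exact ⟨X, rfl⟩)
    rw [hveq] at hle
    have h1 : f1 C c1 X (2 * m) ≤ (3 * (m : ℝ) + 3) * b := le_trans (le_max_left _ _) hle
    have h2 : f1 C c2 X (2 * m) ≤ (3 * (m : ℝ) + 3) * b :=
      le_trans (le_trans (le_max_left _ _) (le_max_right _ _)) hle
    have h3 : f1 C c3 X (2 * m) ≤ (3 * (m : ℝ) + 3) * b :=
      le_trans (le_trans (le_max_right _ _) (le_max_right _ _)) hle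
    have hfeas : 2 * m - X.card ≤ (Finset.univ \ X).card := by
      rw [Finset.card_sdiff_of_subset (Finset.subset_univ X), Finset.card_univ]
      simp only [Fintype.card_sum, Fintype.card_fin]
      omega
    have hCXnn : (0 : ℝ) ≤ ∑ e ∈ X, C e := Finset.sum_nonneg fun e _ => hCpos e
    -- X contains no second-type item
    have hnoinr : ∀ j : Fin m, Sum.inr j ∉ X := by
      intro j hj
      have hCX : M ≤ ∑ e ∈ X, C e := by
        have h := Finset.single_le_sum (fun e _ => hCpos e) hj
        simpa [hC] using h
      have hcm : (0 : ℝ) ≤ complMin c3 X (2 * m) :=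
        le_complMin c3 hfeas fun Y _ _ => Finset.sum_nonneg fun e _ => hc3pos e
      have : M ≤ f1 C c3 X (2 * m) := by unfold f1; linarith
      linarith
    set I : Finset (Fin (2 * m)) := Finset.univ.filter (fun i => Sum.inl i ∈ X) with hI
    have hdisj : ∀ i, Sum.inl i ∈ X ↔ i ∈ I := by intro i; simp [hI]
    have hXI : X = I.image Sum.inl := by
      ext e
      rcases e with i | j
      · simp [hI]
      · simp [hnoinr j]
    have hXcard : X.card = I.card := by
      rw [hXI, Finset.card_image_of_injective _ Sum.inl_injective]
    have htle : I.card ≤ 2 * m := by rw [← hXcard]; exact hXle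
    set A : ℕ := ∑ i ∈ I, a i with hA
    have hA2b : A ≤ 2 * b := by
      rw [hA, ← hsum]
      exact Finset.sum_le_sum_of_subset (Finset.subset_univ I)
    have hA2bR : (A : ℝ) ≤ 2 * b := by exact_mod_cast hA2b
    have hA0 : (0 : ℝ) ≤ A := by positivity
    have hIcsum : ∑ i ∈ Iᶜ, (a i : ℝ) = 2 * b - A := by
      have h := Finset.sum_add_sum_compl I fun i => (a i : ℝ)
      rw [hsumR] at h
      have hAR : ∑ i ∈ I, (a i : ℝ) = A := by rw [hA]; push_cast; rfl
      linarith [hAR ▸ h]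
    have hsumC : ∑ e ∈ X, C e = 3 * (b : ℝ) * I.card + A := by
      rw [hXI, Finset.sum_image (fun _ _ _ _ h => Sum.inl_injective h)]
      simp only [hC, Sum.elim_inl]
      rw [Finset.sum_add_distrib, Finset.sum_const]
      have hAR : ∑ i ∈ I, (a i : ℝ) = A := by rw [hA]; push_cast; rfl
      rw [hAR]
      push_cast; ring
    -- scenario 3 forces |I| ≥ m
    have hmt : m ≤ I.card := by
      by_contra hlt
      push_neg at hlt
      have hcm : M ≤ complMin c3 X (2 * m) := by
        apply le_complMin c3 hfeas
        intro Y hYsub hYcard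
        have hex : ∃ i : Fin (2 * m), Sum.inl i ∈ Y := by
          by_contra hno
          push_neg at hno
          have hsub : Y ⊆ (Finset.univ : Finset (Fin m)).image Sum.inr := by
            intro e he
            rcases e with i | j
            · exact absurd he (hno i)
            · exact Finset.mem_image.mpr ⟨j, Finset.mem_univ _, rfl⟩
          have hcards := Finset.card_le_card hsub
          rw [Finset.card_image_of_injective _ Sum.inr_injective, Finset.card_univ,
            Fintype.card_fin] at hcards
          omega
        obtain ⟨i, hi⟩ := hex
        have h := Finset.single_le_sum (fun e _ => hc3pos e) hi
        simpa [hc3] using h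
      have : M ≤ f1 C c3 X (2 * m) := by unfold f1; linarith
      linarith
    -- a second-stage set with no inr items must be exactly the complement
    have hYeq : ∀ Y ⊆ Finset.univ \ X, Y.card = 2 * m - X.card →
        (∀ j : Fin m, Sum.inr j ∉ Y) → Y = Iᶜ.image Sum.inl := by
      intro Y hYsub hYcard hno
      apply Finset.eq_of_subset_of_card_le
      · intro e he
        rcases e with i | j
        · refine Finset.mem_image.mpr ⟨i, ?_, rfl⟩
          rw [Finset.mem_compl]
          intro hiI
          exact (Finset.mem_sdiff.mp (hYsub he)).2 ((hdisj i).mpr hiI)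
        · exact absurd he (hno j)
      · rw [Finset.card_image_of_injective _ Sum.inl_injective, Finset.card_compl,
          Fintype.card_fin]
        omega
    -- scenario 1 lower bound
    have hcm1 : 4 * (b : ℝ) - 2 * A ≤ complMin c1 X (2 * m) := by
      apply le_complMin c1 hfeas
      intro Y hYsub hYcard
      by_cases hjin : ∃ j : Fin m, Sum.inr j ∈ Y
      · obtain ⟨j, hj⟩ := hjin
        have hMle := Finset.single_le_sum (fun e _ => hc1pos e) hj
        rw [show c1 (Sum.inr j) = M from by rw [hc1]; rfl] at hMle
        have : 4 * (b : ℝ) - 2 * A ≤ M := by rw [hM]; push_cast; nlinarith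
        linarith
      · push_neg at hjin
        rw [hYeq Y hYsub hYcard hjin,
          Finset.sum_image (fun _ _ _ _ h => Sum.inl_injective h)]
        simp only [hc1, Sum.elim_inl]
        rw [← Finset.mul_sum, hIcsum]
        linarith
    -- scenario 2 lower bound
    have hcm2 : (2 * (m : ℝ) - I.card) * (6 * b / (2 * m)) - (2 * b - A) ≤
        complMin c2 X (2 * m) := by
      have hq0 : (0 : ℝ) ≤ 6 * (b : ℝ) / (2 * m) := by positivity
      have hqm : 6 * (b : ℝ) / (2 * m) * (2 * m) = 6 * b := by field_simp
      apply le_complMin c2 hfeas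
      intro Y hYsub hYcard
      by_cases hjin : ∃ j : Fin m, Sum.inr j ∈ Y
      · obtain ⟨j, hj⟩ := hjin
        -- the sum is at least M - 2b
        set g : (Fin (2 * m) ⊕ Fin m) → ℝ := Sum.elim (fun i => (a i : ℝ)) (fun _ => 0)
          with hg
        have hlb : ∀ e ∈ Y.erase (Sum.inr j), -g e ≤ c2 e := by
          rintro (i | j') _
          · simp only [hg, hc2, Sum.elim_inl]; linarith
          · simp only [hg, hc2, Sum.elim_inr, neg_zero]; exact hM0
        have h1' := Finset.sum_le_sum hlb
        have h2' : ∑ e ∈ Y.erase (Sum.inr j), g e ≤ ∑ e, g e :=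
          Finset.sum_le_sum_of_subset_of_nonneg (Finset.subset_univ _)
            (by rintro (i | j') _ _ <;> simp [hg])
        have h3' : ∑ e, g e = 2 * (b : ℝ) := by
          rw [hg, Fintype.sum_sum_type]
          simp [hsumR]
        have hsneg : ∑ e ∈ Y.erase (Sum.inr j), -g e
            = -∑ e ∈ Y.erase (Sum.inr j), g e := by
          rw [Finset.sum_neg_distrib]
        have h4' : M + ∑ e ∈ Y.erase (Sum.inr j), c2 e = ∑ e ∈ Y, c2 e := by
          rw [show M = c2 (Sum.inr j) from by rw [hc2]; rfl]
          exact Finset.add_sum_erase Y c2 hj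
        have hItR : (0 : ℝ) ≤ (I.card : ℝ) := by exact Nat.cast_nonneg _
        have hMb : (2 * (m : ℝ) - I.card) * (6 * b / (2 * m)) - (2 * b - A) ≤ M - 2 * b := by
          rw [hM]; push_cast
          nlinarith [mul_nonneg hItR hq0]
        linarith
      · push_neg at hjin
        rw [hYeq Y hYsub hYcard hjin,
          Finset.sum_image (fun _ _ _ _ h => Sum.inl_injective h)]
        simp only [hc2, Sum.elim_inl]
        rw [Finset.sum_sub_distrib, Finset.sum_const, hIcsum, Finset.card_compl,
          Fintype.card_fin, nsmul_eq_mul]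
        have hcc : ((2 * m - I.card : ℕ) : ℝ) = 2 * m - I.card := by
          push_cast [htle]; ring
        rw [hcc]
    -- combine
    have hineq1 : 3 * (b : ℝ) * I.card + A + (4 * b - 2 * A) ≤ (3 * m + 3) * b := by
      have h := h1; unfold f1 at h; rw [hsumC] at h; linarith
    have hineq2 : 3 * (b : ℝ) * I.card + A +
        ((2 * (m : ℝ) - I.card) * (6 * b / (2 * m)) - (2 * b - A)) ≤ (3 * m + 3) * b := by
      have h := h2; unfold f1 at h; rw [hsumC] at h; linarith
    have htm : I.card = m := by
      by_contra hne
      have hge : m + 1 ≤ I.card := by omega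
      have hgeR : (m : ℝ) + 1 ≤ I.card := by exact_mod_cast hge
      nlinarith [mul_le_mul_of_nonneg_left hgeR (by positivity : (0 : ℝ) ≤ 3 * (b : ℝ))]
    have htmR : (I.card : ℝ) = m := by exact_mod_cast htm
    rw [htmR] at hineq1 hineq2
    have hmq : (2 * (m : ℝ) - m) * (6 * b / (2 * m)) = 3 * b := by
      field_simp; ring
    rw [hmq] at hineq2
    have hAb : (A : ℝ) = b := by linarith
    exact ⟨I, htm, by exact_mod_cast hAb⟩
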